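/- arXiv:1303.1263 — 7 statements merged into one kernel-verified Lean document; each statement's English description precedes it below -/
import Mathlib

section
/- Let h be analytic on a neighborhood of the closed unit disk, m ≥ 2 an integer, g analytic with g'(z) = z^{m-1} h'(z), and φ(t) = h(e^{it}) + conj(g(e^{it})). Then for all real t, with z = e^{it}, one has Im(φ''(t) · conj(φ'(t))) = (m−1)|h'(z)|² · Re( z̄^{m+1} (conj(h'(z))/|h'(z)|)² − 1 ) whenever h'(z) ≠ 0, and in particular Im(φ''(t) · conj(φ'(t))) ≤ 0. -/
open Complex Metric


lemma hasDerivAt_conj' {f : ℝ → ℂ} {f' : ℂ} {t : ℝ} (hf : HasDerivAt f f' t) :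
    HasDerivAt (fun s => (starRingEnd ℂ) (f s)) ((starRingEnd ℂ) f') t := by
  exact hf.star

lemma alg (k : ℕ) (z w c : ℂ) (hz : z * (starRingEnd ℂ) z = 1) :
    (((-(z*w) - z^2*c) - (starRingEnd ℂ) (((k:ℂ)+2)*z^(k+2)*w + z^(k+3)*c)) *
       (starRingEnd ℂ) (Complex.I*z*w - Complex.I*((starRingEnd ℂ) z)^(k+2) * (starRingEnd ℂ) w)).im
    = ((k:ℝ)+1) * ((((starRingEnd ℂ) z)^(k+3) * ((starRingEnd ℂ) w)^2).re - ‖w‖ ^2) := by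
  set Z := (starRingEnd ℂ) z with hZ
  set T : ℂ := Z^(k+3) * ((starRingEnd ℂ) w)^2 with hT
  set S1 : ℂ := z*c*(starRingEnd ℂ) w with hS1
  set S2 : ℂ := Z^(k+4)*(starRingEnd ℂ) c*(starRingEnd ℂ) w with hS2
  set W : ℂ := -((k:ℂ)+1)*(w*(starRingEnd ℂ) w)
      + (((k:ℂ)+2)*T - (starRingEnd ℂ) T)
      + (S1 - (starRingEnd ℂ) S1)
      + (S2 - (starRingEnd ℂ) S2) with hWdef
  have h2 : z^(k+2) * Z^(k+2) = 1 := by rw [← mul_pow, hz, one_pow]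
  have hX : ((-(z*w) - z^2*c) - (starRingEnd ℂ) (((k:ℂ)+2)*z^(k+2)*w + z^(k+3)*c)) *
       (starRingEnd ℂ) (Complex.I*z*w - Complex.I*Z^(k+2) * (starRingEnd ℂ) w) = Complex.I * W := by
    rw [hWdef, hT, hS1, hS2, hZ]
    simp only [map_add, map_mul, map_pow, map_sub, map_natCast, map_ofNat, Complex.conj_conj,
      Complex.conj_I]
    linear_combination (Complex.I*(w*(starRingEnd ℂ) w + z*c*(starRingEnd ℂ) w)) * hz -
      (Complex.I*(((k:ℂ)+2)*(w*(starRingEnd ℂ) w) + (starRingEnd ℂ) z*(starRingEnd ℂ) c*w)) * h2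
  rw [hX]
  have him : (Complex.I * W).im = W.re := by simp
  rw [him, hWdef]
  have e4 : w * (starRingEnd ℂ) w = ((‖w‖ ^2 : ℝ) : ℂ) := by
    rw [Complex.mul_conj, Complex.sq_norm]
  rw [e4]
  simp only [Complex.add_re, Complex.sub_re, Complex.neg_re, Complex.mul_re, Complex.neg_im,
    Complex.add_im, Complex.one_re, Complex.one_im, Complex.natCast_re, Complex.natCast_im,
    Complex.ofReal_re, Complex.ofReal_im, Complex.conj_re, Complex.re_ofNat, Complex.im_ofNat]
  ring


/-- Im(φ''(t)·conj(φ'(t))) = (m−1)|h'(z)|²·Re(z̄^{m+1}(conj h'(z)/|h'(z)|)² − 1)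
whenever h'(z) ≠ 0 (z = e^{it}), and in particular Im(φ''(t)·conj(φ'(t))) ≤ 0. -/
theorem stmt_2 (h g : ℂ → ℂ) (m : ℕ) (hm : 2 ≤ m)
    (hh : AnalyticOnNhd ℂ h (closedBall 0 1))
    (hg : AnalyticOnNhd ℂ g (closedBall 0 1))
    (hg' : ∀ z : ℂ, z ∈ closedBall (0 : ℂ) 1 → deriv g z = z ^ (m - 1) * deriv h z)
    (φ : ℝ → ℂ)
    (hφ : ∀ t : ℝ, φ t = h (Complex.exp (Complex.I * t)) +
      (starRingEnd ℂ) (g (Complex.exp (Complex.I * t))))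
    (t : ℝ) :
    (deriv h (Complex.exp (Complex.I * t)) ≠ 0 →
      (deriv (deriv φ) t * (starRingEnd ℂ) (deriv φ t)).im =
        ((m : ℝ) - 1) * ‖deriv h (Complex.exp (Complex.I * t))‖ ^ 2 *
          (((starRingEnd ℂ) (Complex.exp (Complex.I * t))) ^ (m + 1) *
            ((starRingEnd ℂ) (deriv h (Complex.exp (Complex.I * t))) /
              (‖deriv h (Complex.exp (Complex.I * t))‖ : ℂ)) ^ 2 - 1).re) ∧
    (deriv (deriv φ) t * (starRingEnd ℂ) (deriv φ t)).im ≤ 0 := by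
  obtain ⟨k, rfl⟩ : ∃ k, m = k + 2 := ⟨m - 2, by omega⟩
  have hm1 : k + 2 - 1 = k + 1 := rfl
  rw [hm1] at hg'
  set E : ℝ → ℂ := fun s => Complex.exp (Complex.I * s) with hEdef
  have hE : ∀ s : ℝ, HasDerivAt E (Complex.I * E s) s := by
    intro s
    have : HasDerivAt (fun z : ℂ => Complex.exp (Complex.I * z))
        (Complex.I * Complex.exp (Complex.I * s)) (s : ℂ) := by
      simpa [mul_comm] using (((hasDerivAt_id (s : ℂ)).const_mul Complex.I).cexp)
    exact this.comp_ofReal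
  have hmem : ∀ s : ℝ, E s ∈ closedBall (0 : ℂ) 1 := by
    intro s
    simp [hEdef, mem_closedBall, Complex.dist_eq, Complex.norm_exp]
  have hdh : ∀ s : ℝ, HasDerivAt (fun u => h (E u)) (deriv h (E s) * (Complex.I * E s)) s :=
    fun s => ((hh _ (hmem s)).differentiableAt.hasDerivAt).comp s (hE s)
  have hdg : ∀ s : ℝ, HasDerivAt (fun u => g (E u)) (deriv g (E s) * (Complex.I * E s)) s :=
    fun s => ((hg _ (hmem s)).differentiableAt.hasDerivAt).comp s (hE s)
  have hddh : ∀ s : ℝ, HasDerivAt (fun u => deriv h (E u))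
      (deriv (deriv h) (E s) * (Complex.I * E s)) s :=
    fun s => ((hh.deriv _ (hmem s)).differentiableAt.hasDerivAt).comp s (hE s)
  -- first derivative
  set ψ : ℝ → ℂ := fun s => Complex.I * E s * deriv h (E s)
      - Complex.I * ((starRingEnd ℂ) (E s))^(k+2) * (starRingEnd ℂ) (deriv h (E s)) with hψdef
  have hψ : ∀ s : ℝ, HasDerivAt φ (ψ s) s := by
    intro s
    have h1 : HasDerivAt (fun u => h (E u) + (starRingEnd ℂ) (g (E u)))
        (deriv h (E s) * (Complex.I * E s) + (starRingEnd ℂ) (deriv g (E s) * (Complex.I * E s))) s :=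
      (hdh s).add (hasDerivAt_conj' (hdg s))
    have h2 : HasDerivAt φ
        (deriv h (E s) * (Complex.I * E s) + (starRingEnd ℂ) (deriv g (E s) * (Complex.I * E s))) s := by
      have : φ = fun u => h (E u) + (starRingEnd ℂ) (g (E u)) := funext hφ
      rw [this]; exact h1
    convert h2 using 1
    rw [hg' _ (hmem s), hψdef]
    simp only [map_mul, map_pow, Complex.conj_I]
    ring
  have hderivφ : deriv φ = ψ := funext fun s => (hψ s).deriv
  -- second derivative
  set z := E t with hz
  set w := deriv h z with hw
  set c := deriv (deriv h) z with hc
  have hψt : ψ t = Complex.I*z*w - Complex.I*((starRingEnd ℂ) z)^(k+2) * (starRingEnd ℂ) w := rfl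
  have hD : HasDerivAt ψ
      ((Complex.I * (Complex.I * E t)) * deriv h (E t)
        + (Complex.I * E t) * (deriv (deriv h) (E t) * (Complex.I * E t))
      - ((Complex.I * (((k+2:ℕ):ℂ) * ((starRingEnd ℂ) (E t))^(k+2-1) * (starRingEnd ℂ) (Complex.I * E t)))
          * (starRingEnd ℂ) (deriv h (E t))
        + (Complex.I * ((starRingEnd ℂ) (E t))^(k+2))
          * (starRingEnd ℂ) (deriv (deriv h) (E t) * (Complex.I * E t)))) t := by
    have t1 : HasDerivAt (fun s => Complex.I * E s * deriv h (E s))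
        ((Complex.I * (Complex.I * E t)) * deriv h (E t)
          + (Complex.I * E t) * (deriv (deriv h) (E t) * (Complex.I * E t))) t :=
      (((hE t).const_mul Complex.I).mul (hddh t))
    have t2 : HasDerivAt (fun s => Complex.I * ((starRingEnd ℂ) (E s))^(k+2) * (starRingEnd ℂ) (deriv h (E s)))
        ((Complex.I * (((k+2:ℕ):ℂ) * ((starRingEnd ℂ) (E t))^(k+2-1) * (starRingEnd ℂ) (Complex.I * E t)))
          * (starRingEnd ℂ) (deriv h (E t))
        + (Complex.I * ((starRingEnd ℂ) (E t))^(k+2))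
          * (starRingEnd ℂ) (deriv (deriv h) (E t) * (Complex.I * E t))) t := by
      have u1 : HasDerivAt (fun s => ((starRingEnd ℂ) (E s))^(k+2))
          (((k+2:ℕ):ℂ) * ((starRingEnd ℂ) (E t))^(k+2-1) * (starRingEnd ℂ) (Complex.I * E t)) t :=
        by have := (hasDerivAt_pow (k+2) ((starRingEnd ℂ) (E t))).comp t (hasDerivAt_conj' (hE t)); exact this
      exact (u1.const_mul Complex.I).mul (hasDerivAt_conj' (hddh t))
    exact t1.sub t2
  have hd2 : deriv (deriv φ) t =
      (-(z*w) - z^2*c) - (starRingEnd ℂ) (((k:ℂ)+2)*z^(k+2)*w + z^(k+3)*c) := by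
    rw [hderivφ, hD.deriv]
    simp only [← hz, ← hw, ← hc, hm1, map_add, map_mul, map_pow, map_natCast, map_ofNat,
      Complex.conj_I, Nat.cast_add, Nat.cast_ofNat]
    linear_combination (z*w + z^2*c + ((k:ℂ)+2)*((starRingEnd ℂ) z)^(k+2)*(starRingEnd ℂ) w
      + ((starRingEnd ℂ) z)^(k+3)*(starRingEnd ℂ) c) * Complex.I_sq
  have hzZ : z * (starRingEnd ℂ) z = 1 := by
    rw [Complex.mul_conj]
    norm_cast
    simp [hz, hEdef, Complex.normSq_eq_norm_sq, Complex.norm_exp]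
  have key : (deriv (deriv φ) t * (starRingEnd ℂ) (deriv φ t)).im
      = ((k:ℝ)+1) * ((((starRingEnd ℂ) z)^(k+3) * ((starRingEnd ℂ) w)^2).re - ‖w‖ ^2) := by
    rw [hd2, hderivφ, hψt]
    exact alg k z w c hzZ
  constructor
  · intro hw0
    rw [key]
    have habs : (0:ℝ) < ‖w‖ := by simpa [norm_pos_iff] using hw0
    have hmul : ((starRingEnd ℂ) z) ^ (k + 2 + 1) *
        ((starRingEnd ℂ) w / ((‖w‖ : ℝ) : ℂ)) ^ 2
        = (((‖w‖ ^2)⁻¹ : ℝ) : ℂ) * (((starRingEnd ℂ) z)^(k+3) * ((starRingEnd ℂ) w)^2) := by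
      rw [div_pow, div_eq_mul_inv, ← Complex.ofReal_pow, ← Complex.ofReal_inv]
      ring
    rw [hmul, Complex.sub_re, Complex.one_re, Complex.re_ofReal_mul]
    push_cast
    field_simp
    ring
  · rw [key]
    have h1 : (((starRingEnd ℂ) z)^(k+3) * ((starRingEnd ℂ) w)^2).re ≤ ‖w‖ ^2 := by
      calc (((starRingEnd ℂ) z)^(k+3) * ((starRingEnd ℂ) w)^2).re
          ≤ ‖((starRingEnd ℂ) z)^(k+3) * ((starRingEnd ℂ) w)^2‖ := Complex.re_le_norm _
        _ = ‖w‖ ^2 := by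
            simp [map_mul, map_pow, Complex.norm_conj]
            have : ‖z‖ = 1 := by simp [hz, hEdef, Complex.norm_exp]
            simp [this]
    have h2 : (0:ℝ) ≤ (k:ℝ)+1 := by positivity
    nlinarith
end

section
/- Let h be analytic on a neighborhood of the closed unit disk, m ≥ 2 an integer, g analytic with g'(z) = z^{m-1} h'(z), and φ(t) = h(e^{it}) + conj(g(e^{it})). At every t where φ'(t) ≠ 0, one has Im(φ''(t)/φ'(t)) ≤ 0. -/
open Complex Metric

lemma key0 (A C w : ℂ) (K : ℝ) (hK : 0 ≤ K) (hw : Complex.normSq w = 1)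
    (hne : Complex.I * (A - (starRingEnd ℂ) w * (starRingEnd ℂ) A) ≠ 0) :
    ((-C - (starRingEnd ℂ) w * (starRingEnd ℂ) C
        - (K : ℂ) * (starRingEnd ℂ) w * (starRingEnd ℂ) A) /
      (Complex.I * (A - (starRingEnd ℂ) w * (starRingEnd ℂ) A))).im ≤ 0 := by
  set D := Complex.I * (A - (starRingEnd ℂ) w * (starRingEnd ℂ) A) with hD
  have hpos : 0 < Complex.normSq D := by
    simpa [Complex.normSq_pos] using hne
  rw [Complex.div_im]
  rw [div_sub_div_same, div_nonpos_iff]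
  right
  refine ⟨?_, le_of_lt hpos⟩
  obtain ⟨p, q⟩ := w
  obtain ⟨r, s⟩ := A
  obtain ⟨cr, ci⟩ := C
  simp only [Complex.normSq_mk] at hw
  have h1 : p * (r^2 - s^2) - q * (2*r*s) ≤ r^2 + s^2 := by
    nlinarith [sq_nonneg (q*(r^2-s^2) + p*(2*r*s)),
      sq_nonneg (r^2+s^2 + (p*(r^2-s^2) - q*(2*r*s))), sq_nonneg (r^2+s^2)]
  have h2 : 0 ≤ K * (r^2 + s^2 - (p * (r^2 - s^2) - q * (2*r*s))) :=
    mul_nonneg hK (by linarith)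
  have e1 : (p*p + q*q - 1) * (cr*r + ci*s) = 0 := by
    linear_combination (cr*r + ci*s) * hw
  have e2 : (p*p + q*q - 1) * (K*(r^2+s^2)) = 0 := by
    linear_combination (K*(r^2+s^2)) * hw
  simp only [hD, Complex.mul_im, Complex.mul_re, Complex.sub_re, Complex.sub_im,
    Complex.add_re, Complex.add_im, Complex.neg_re, Complex.neg_im, Complex.I_re,
    Complex.I_im, Complex.ofReal_re, Complex.ofReal_im, Complex.conj_re, Complex.conj_im]
  nlinarith [h2, e1, e2]

/-- at every t where φ'(t) ≠ 0, Im(φ''(t)/φ'(t)) ≤ 0. -/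
theorem stmt_3 (h g : ℂ → ℂ) (m : ℕ) (hm : 2 ≤ m)
    (hh : AnalyticOnNhd ℂ h (closedBall 0 1))
    (hg : AnalyticOnNhd ℂ g (closedBall 0 1))
    (hg' : ∀ z : ℂ, z ∈ closedBall (0 : ℂ) 1 → deriv g z = z ^ (m - 1) * deriv h z)
    (φ : ℝ → ℂ)
    (hφ : ∀ t : ℝ, φ t = h (Complex.exp (Complex.I * t)) +
      (starRingEnd ℂ) (g (Complex.exp (Complex.I * t))))
    (t : ℝ) (hne : deriv φ t ≠ 0) :
    (deriv (deriv φ) t / deriv φ t).im ≤ 0 := by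
  obtain ⟨k, rfl⟩ : ∃ k, m = k + 2 := ⟨m - 2, by omega⟩
  have hmem : ∀ s : ℝ, Complex.exp (Complex.I * s) ∈ closedBall (0:ℂ) 1 := by
    intro s
    simp [Metric.mem_closedBall, dist_zero_right, Complex.norm_exp]
  have hder_e : ∀ s : ℝ, HasDerivAt (fun u : ℝ => Complex.exp (Complex.I * u))
      (Complex.I * Complex.exp (Complex.I * s)) s := by
    intro s
    have h1 : HasDerivAt (fun w : ℂ => Complex.exp (Complex.I * w))
        (Complex.exp (Complex.I * s) * Complex.I) (s : ℂ) := by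
      have h0 : HasDerivAt (fun w : ℂ => Complex.I * w) Complex.I (s : ℂ) :=
        ((hasDerivAt_id' (x := (s : ℂ))).const_mul Complex.I).congr_deriv (mul_one _)
      exact (Complex.hasDerivAt_exp (Complex.I * s)).comp (s : ℂ) h0
    simpa [mul_comm] using h1.comp_ofReal
  set e : ℝ → ℂ := fun u => Complex.exp (Complex.I * u) with he_def
  -- first derivative of φ everywhere
  have hφ' : ∀ s : ℝ, HasDerivAt φ
      (deriv h (e s) * (Complex.I * e s) +
        (starRingEnd ℂ) ((e s)^(k+1) * deriv h (e s) * (Complex.I * e s))) s := by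
    intro s
    have h1 : HasDerivAt (fun u : ℝ => h (e u)) (deriv h (e s) * (Complex.I * e s)) s :=
      ((hh _ (hmem s)).differentiableAt.hasDerivAt).comp s (hder_e s)
    have h2 : HasDerivAt (fun u : ℝ => g (e u)) (deriv g (e s) * (Complex.I * e s)) s :=
      ((hg _ (hmem s)).differentiableAt.hasDerivAt).comp s (hder_e s)
    have h3 : HasDerivAt (fun u : ℝ => (starRingEnd ℂ) (g (e u)))
        ((starRingEnd ℂ) (deriv g (e s) * (Complex.I * e s))) s := h2.star
    have h4 := h1.add h3
    have hfun : φ = fun u : ℝ => h (e u) + (starRingEnd ℂ) (g (e u)) := funext hφ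
    rw [hfun]
    have hgd : deriv g (e s) = (e s)^(k+1) * deriv h (e s) := by
      have := hg' _ (hmem s)
      simpa using this
    rw [hgd] at h4
    exact h4
  have hderivφ : deriv φ = fun s =>
      deriv h (e s) * (Complex.I * e s) +
        (starRingEnd ℂ) ((e s)^(k+1) * deriv h (e s) * (Complex.I * e s)) :=
    funext fun s => (hφ' s).deriv
  -- second derivative at t
  have hh' : AnalyticOnNhd ℂ (deriv h) (closedBall 0 1) := hh.deriv
  have hA : HasDerivAt (fun u : ℝ => deriv h (e u))
      (deriv (deriv h) (e t) * (Complex.I * e t)) t :=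
    by
      have h0 : HasDerivAt (deriv h) (deriv (deriv h) (e t)) (e t) :=
        (hh' _ (hmem t)).differentiableAt.hasDerivAt
      exact h0.comp t (hder_e t)
  have hB : HasDerivAt (fun u : ℝ => Complex.I * e u)
      (Complex.I * (Complex.I * e t)) t := (hder_e t).const_mul Complex.I
  have hP : HasDerivAt (fun u : ℝ => (e u)^(k+1))
      (((k+1 : ℕ) : ℂ) * (e t)^k * (Complex.I * e t)) t := by
    have h0 := (hasDerivAt_pow (k+1) (e t)).comp t (hder_e t)
    exact h0.congr_deriv (by push_cast; ring)
  have hpart2 := ((hP.mul hA).mul hB).star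
  have hsum := (hA.mul hB).add hpart2
  have hd2 : deriv (deriv φ) t =
      (deriv (deriv h) (e t) * (Complex.I * e t) * (Complex.I * e t) +
        deriv h (e t) * (Complex.I * (Complex.I * e t))) +
      (starRingEnd ℂ) ((((k+1 : ℕ) * (e t)^k * (Complex.I * e t)) * deriv h (e t) +
          (e t)^(k+1) * (deriv (deriv h) (e t) * (Complex.I * e t))) * (Complex.I * e t) +
        (e t)^(k+1) * deriv h (e t) * (Complex.I * (Complex.I * e t))) := by
    rw [hderivφ]
    exact hsum.deriv
  have hd1 : deriv φ t =
      deriv h (e t) * (Complex.I * e t) +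
        (starRingEnd ℂ) ((e t)^(k+1) * deriv h (e t) * (Complex.I * e t)) := by
    rw [hderivφ]
  -- apply key0
  set Z := e t with hZ_def
  set a := deriv h Z with ha_def
  set b := deriv (deriv h) Z with hb_def
  have hZ1 : Complex.normSq Z = 1 := by
    have h1 : ‖Z‖ = 1 := by simp [hZ_def, he_def, Complex.norm_exp]
    rw [Complex.normSq_eq_norm_sq, h1, one_pow]
  have hw1 : Complex.normSq (Z^(k+1)) = 1 := by
    simp [map_pow, hZ1]
  have hnum : deriv (deriv φ) t =
      -(Z*a + Z^2*b) - (starRingEnd ℂ) (Z^(k+1)) * (starRingEnd ℂ) (Z*a + Z^2*b)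
        - (((k+1 : ℝ)) : ℂ) * (starRingEnd ℂ) (Z^(k+1)) * (starRingEnd ℂ) (Z*a) := by
    rw [hd2]
    simp only [map_mul, map_add, map_pow, Complex.conj_I, map_natCast, map_ofNat]
    push_cast
    ring_nf
    rw [Complex.I_sq]
    ring
  have hden : deriv φ t =
      Complex.I * ((Z*a) - (starRingEnd ℂ) (Z^(k+1)) * (starRingEnd ℂ) (Z*a)) := by
    rw [hd1]
    simp only [map_mul, Complex.conj_I]
    ring
  have hne' : Complex.I * ((Z*a) - (starRingEnd ℂ) (Z^(k+1)) * (starRingEnd ℂ) (Z*a)) ≠ 0 := by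
    rw [← hden]; exact hne
  have := key0 (Z*a) (Z*a + Z^2*b) (Z^(k+1)) (k+1 : ℝ) (by positivity) hw1 hne'
  rw [hnum, hden]
  exact this
end

section
/- Let p ≥ 1 and m ≥ 2 be integers, and h analytic near the closed unit disk with H(z) = h'(z)/z^{p-1} ≠ 0 for |z| ≤ 1. If Re(1 + z h''(z)/h'(z)) > −(m−1)/2 for all z in the closed unit disk, then the function F(t) = (2p+m−1)t + 2 Im(log H(e^{it})) (with a continuous branch of log) is strictly increasing on ℝ. -/
open Complex Metric

/-- if Re(1 + z h''(z)/h'(z)) > −(m−1)/2 on the closed unit disk, then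
F(t) = (2p+m−1)t + 2 Im(log H(e^{it})) (continuous/differentiable branch) is strictly
increasing on ℝ. -/
theorem stmt_5 (h : ℂ → ℂ) (p m : ℕ) (hp : 1 ≤ p) (hm : 2 ≤ m)
    (hh : AnalyticOnNhd ℂ h (closedBall 0 1))
    (H : ℂ → ℂ) (hH : ∀ z : ℂ, H z = deriv h z / z ^ (p - 1))
    (hHne : ∀ z ∈ closedBall (0 : ℂ) 1, H z ≠ 0)
    (hre : ∀ z ∈ closedBall (0 : ℂ) 1,
      ((1 : ℂ) + z * deriv (deriv h) z / deriv h z).re > -(((m : ℝ) - 1) / 2))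
    (A : ℝ → ℝ) (hA : Differentiable ℝ A)
    (hbranch : ∀ t : ℝ, H (Complex.exp (Complex.I * t)) =
      (‖H (Complex.exp (Complex.I * t))‖ : ℂ) * Complex.exp (Complex.I * (A t)))
    (F : ℝ → ℝ)
    (hF : ∀ t : ℝ, F t = (2 * p + m - 1 : ℝ) * t + 2 * A t) :
    StrictMono F := by
  have hball : ∀ t : ℝ, Complex.exp (Complex.I * t) ∈ closedBall (0:ℂ) 1 := by
    intro t
    simp [mem_closedBall, Complex.dist_eq, Complex.norm_exp]
  set k : ℕ := p - 1 with hk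
  -- the function g(s) = H(e^{is})
  set g : ℝ → ℂ := fun s => H (Complex.exp (Complex.I * s)) with hgdef
  have hgeq : ∀ s : ℝ, g s =
      deriv h (Complex.exp (Complex.I * s)) * Complex.exp (-((k:ℂ) * (Complex.I * s))) := by
    intro s
    show H (Complex.exp (Complex.I * s)) = _
    rw [hH, div_eq_mul_inv, ← Complex.exp_nat_mul, ← Complex.exp_neg]
  -- key derivative computation
  have key : ∀ t : ℝ, deriv A t =
      (Complex.exp (Complex.I * t) * deriv (deriv h) (Complex.exp (Complex.I * t)) /
        deriv h (Complex.exp (Complex.I * t))).re - (k : ℝ) := by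
    intro t
    set z : ℂ := Complex.exp (Complex.I * t) with hz
    have hzmem := hball t
    have hzne : z ≠ 0 := Complex.exp_ne_zero _
    have hd1 : deriv h z ≠ 0 := by
      intro h0
      exact hHne z hzmem (by rw [hH, h0, zero_div])
    set w : ℂ := z * deriv (deriv h) z / deriv h z with hw
    set A' : ℝ := deriv A t with hA'
    set r : ℝ := ‖H z‖ with hr
    have hrpos : 0 < r := norm_pos_iff.mpr (hHne z hzmem)
    set V : ℂ := Complex.exp (-((k:ℂ) * (Complex.I * t))) with hV
    -- derivative of s ↦ exp (I s)
    have hzexp : HasDerivAt (fun s : ℝ => Complex.exp (Complex.I * s)) (Complex.I * z) t := by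
      have h1 := ((hasDerivAt_id (t:ℂ)).const_mul Complex.I).cexp
      simpa [hz, mul_comm] using h1.comp_ofReal
    -- derivative of u(s) = deriv h (exp (I s))
    have hd2 : HasDerivAt (deriv h) (deriv (deriv h) z) z :=
      ((hh.deriv) z hzmem).differentiableAt.hasDerivAt
    have hu : HasDerivAt (fun s : ℝ => deriv h (Complex.exp (Complex.I * s)))
        (deriv (deriv h) z * (Complex.I * z)) t := HasDerivAt.comp (h₂ := deriv h) t hd2 hzexp
    -- derivative of V(s) = exp (-(k (I s)))
    have hv : HasDerivAt (fun s : ℝ => Complex.exp (-((k:ℂ) * (Complex.I * s))))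
        (V * (-((k:ℂ) * Complex.I))) t := by
      have h2 := ((((hasDerivAt_id (t:ℂ)).const_mul Complex.I).const_mul (k:ℂ)).neg).cexp
      have h3 := h2.comp_ofReal
      convert h3 using 2 <;> simp [hV]
    -- derivative of g
    have hg : HasDerivAt g
        (deriv (deriv h) z * (Complex.I * z) * V + deriv h z * (V * (-((k:ℂ) * Complex.I)))) t := by
      have : g = fun s : ℝ => deriv h (Complex.exp (Complex.I * s)) *
          Complex.exp (-((k:ℂ) * (Complex.I * s))) := funext hgeq
      rw [this]
      exact hu.mul hv
    -- derivative of φ(s) = g(s) * exp(-(I A s))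
    set E : ℂ := Complex.exp (-(Complex.I * (A t))) with hE
    have hexpA : HasDerivAt (fun s : ℝ => Complex.exp (-(Complex.I * (A s))))
        (E * (-(Complex.I * A'))) t := by
      have h1 : HasDerivAt (fun s : ℝ => -(Complex.I * (A s : ℂ))) (-(Complex.I * A')) t :=
        (((hA t).hasDerivAt.ofReal_comp).const_mul Complex.I).neg
      exact h1.cexp
    set D : ℂ := (deriv (deriv h) z * (Complex.I * z) * V +
        deriv h z * (V * (-((k:ℂ) * Complex.I)))) * E + g t * (E * (-(Complex.I * A'))) with hD
    have hφ : HasDerivAt (fun s : ℝ => g s * Complex.exp (-(Complex.I * (A s)))) D t :=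
      hg.mul hexpA
    -- φ is real-valued, equal to abs (g s)
    have hφreal : (fun s : ℝ => g s * Complex.exp (-(Complex.I * (A s)))) =
        fun s : ℝ => ((‖H (Complex.exp (Complex.I * s))‖ : ℝ) : ℂ) := by
      funext s
      show H (Complex.exp (Complex.I * s)) * _ = _
      conv_lhs => rw [hbranch s]
      rw [mul_assoc, ← Complex.exp_add, add_neg_cancel, Complex.exp_zero, mul_one]
    -- hence its derivative has zero imaginary part
    have himD : D.im = 0 := by
      have h1 : HasDerivAt (fun s : ℝ => (g s * Complex.exp (-(Complex.I * (A s)))).im)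
          (Complex.imCLM D) t := Complex.imCLM.hasFDerivAt.comp_hasDerivAt t hφ
      have h2 : (fun s : ℝ => (g s * Complex.exp (-(Complex.I * (A s)))).im) = fun _ => (0:ℝ) := by
        funext s
        rw [congrFun hφreal s]
        exact Complex.ofReal_im _
      rw [h2] at h1
      have h3 : HasDerivAt (fun _ : ℝ => (0:ℝ)) 0 t := hasDerivAt_const t 0
      simpa using h1.unique h3
    -- now simplify D
    have hgt : g t = deriv h z * V := by rw [hgeq t]
    have hgE : g t * E = (r : ℂ) := by
      have hb := hbranch t
      rw [hgdef] at *
      calc H (Complex.exp (Complex.I * t)) * E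
          = (r:ℂ) * (Complex.exp (Complex.I * (A t)) * Complex.exp (-(Complex.I * (A t)))) := by
            rw [hb, hE]; ring
        _ = (r:ℂ) := by rw [← Complex.exp_add, add_neg_cancel, Complex.exp_zero, mul_one]
    have hDval : D = (r : ℂ) * (Complex.I * (w - (k:ℂ) - (A':ℂ))) := by
      have h1 : deriv (deriv h) z * (Complex.I * z) * V +
          deriv h z * (V * (-((k:ℂ) * Complex.I))) = g t * (Complex.I * (w - (k:ℂ))) := by
        rw [hgt, hw]
        field_simp
        ring
      rw [hD, h1]
      have : g t * (Complex.I * (w - (k:ℂ))) * E + g t * (E * (-(Complex.I * A')))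
          = (g t * E) * (Complex.I * (w - (k:ℂ) - (A':ℂ))) := by ring
      rw [this, hgE]
    have him2 : r * (w.re - (k:ℝ) - A') = 0 := by
      have := himD
      rw [hDval] at this
      simpa [Complex.mul_im, Complex.mul_re, Complex.sub_re, Complex.sub_im] using this
    have : w.re - (k:ℝ) - A' = 0 := by
      rcases mul_eq_zero.mp him2 with h' | h'
      · exact absurd h' (ne_of_gt hrpos)
      · exact h'
    rw [hA'] at this ⊢
    rw [hw] at this
    linarith
  -- conclude
  apply strictMono_of_deriv_pos
  intro t
  set z : ℂ := Complex.exp (Complex.I * t) with hz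
  have hzmem := hball t
  have hFder : HasDerivAt F ((2 * (p:ℝ) + (m:ℝ) - 1) + 2 * deriv A t) t := by
    have : F = fun s => (2 * (p:ℝ) + (m:ℝ) - 1) * s + 2 * A s := funext hF
    rw [this]
    simpa only [mul_one, Pi.add_def] using ((hasDerivAt_id' t).const_mul (2 * (p:ℝ) + (m:ℝ) - 1)).add
      ((hA t).hasDerivAt.const_mul 2)
  rw [hFder.deriv]
  have hkr : (k : ℝ) = (p : ℝ) - 1 := by
    rw [hk]
    push_cast [Nat.cast_sub hp]
    ring
  have hA' := key t
  have hw := hre z hzmem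
  have hre1 : ((1 : ℂ) + z * deriv (deriv h) z / deriv h z).re
      = 1 + (z * deriv (deriv h) z / deriv h z).re := by
    simp [Complex.add_re]
  rw [hre1] at hw
  have hm2 : (2:ℝ) ≤ (m:ℝ) := by exact_mod_cast hm
  rw [hA', hkr]
  linarith
end

section
/- Let p ≥ 1, m ≥ 2 be integers. The harmonic function f(z) = z^p + conj( (p/(p+m−1)) z^{p+m-1} ) is p-valent on the open unit disk: for every w ∈ ℂ, the equation f(z) = w has at most p solutions (counted with multiplicity) in |z| < 1. -/
open Complex Metric

lemma aux_sin_mul_le {l x : ℝ} (hl0 : 0 ≤ l) (hl1 : l ≤ 1) (hx0 : 0 ≤ x)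
    (hx1 : x ≤ Real.pi) : l * Real.sin x ≤ Real.sin (l * x) := by
  have h := strictConcaveOn_sin_Icc.concaveOn.2 (x := x) (y := 0)
    ⟨hx0, hx1⟩ ⟨le_refl 0, Real.pi_pos.le⟩ hl0 (by linarith : (0:ℝ) ≤ 1 - l) (by ring)
  simpa using h

lemma aux_G_mono (p N : ℕ) (hp : 1 ≤ p) (hpN : p < N) {a b : ℝ}
    (hb : 0 ≤ b) (hab : b < a) (ha : a < 1) :
    (p : ℝ) * (a ^ N - b ^ N) < (N : ℝ) * (a ^ p - b ^ p) := by
  have hmono : StrictMonoOn (fun r : ℝ => (N : ℝ) * r ^ p - (p : ℝ) * r ^ N)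
      (Set.Icc 0 1) := by
    apply strictMonoOn_of_deriv_pos (convex_Icc 0 1)
    · fun_prop
    · intro x hx
      rw [interior_Icc] at hx
      have h1 : HasDerivAt (fun r : ℝ => (N : ℝ) * r ^ p - (p : ℝ) * r ^ N)
          ((N : ℝ) * ((p : ℝ) * x ^ (p - 1)) - (p : ℝ) * ((N : ℝ) * x ^ (N - 1))) x :=
        ((hasDerivAt_pow p x).const_mul _).sub ((hasDerivAt_pow N x).const_mul _)
      rw [h1.deriv]
      have hxx : x ^ (N - 1) < x ^ (p - 1) :=
        pow_lt_pow_right_of_lt_one₀ hx.1 hx.2 (by omega)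
      have hp0 : (0 : ℝ) < p := by exact_mod_cast hp
      have hN0 : (0 : ℝ) < N := by exact_mod_cast (by omega : 0 < N)
      nlinarith [mul_pos hp0 hN0]
  have h := hmono (Set.mem_Icc.2 ⟨hb, by linarith⟩)
    (Set.mem_Icc.2 ⟨by linarith, ha.le⟩) hab
  simp only at h
  linarith

lemma aux_sq_mono (p N : ℕ) (hp : 1 ≤ p) (hpN : p < N) {a b : ℝ}
    (hb : 0 ≤ b) (hab : b ≤ a) (ha : a < 1) :
    (p : ℝ) ^ 2 * (a ^ N - b ^ N) ^ 2 ≤ (N : ℝ) ^ 2 * (a ^ p - b ^ p) ^ 2 := by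
  rcases eq_or_lt_of_le hab with rfl | h
  · simp
  · have h1 := aux_G_mono p N hp hpN hb h ha
    have h2 : 0 ≤ (p : ℝ) * (a ^ N - b ^ N) := by
      have : b ^ N ≤ a ^ N := pow_le_pow_left₀ hb hab N
      have := Nat.cast_nonneg (α := ℝ) p
      nlinarith
    nlinarith [mul_self_lt_mul_self h2 h1]

lemma aux_sq_mono_strict (p N : ℕ) (hp : 1 ≤ p) (hpN : p < N) {a b : ℝ}
    (hb : 0 ≤ b) (hab : b < a) (ha : a < 1) :
    (p : ℝ) ^ 2 * (a ^ N - b ^ N) ^ 2 < (N : ℝ) ^ 2 * (a ^ p - b ^ p) ^ 2 := by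
  have h1 := aux_G_mono p N hp hpN hb hab ha
  have h2 : 0 ≤ (p : ℝ) * (a ^ N - b ^ N) := by
    have : b ^ N ≤ a ^ N := pow_le_pow_left₀ hb hab.le N
    have := Nat.cast_nonneg (α := ℝ) p
    nlinarith
  nlinarith [mul_self_lt_mul_self h2 h1]

/-- For 0 ≤ e ≤ π/N : p * sin(N e/2) ≤ N * sin(p e/2), both sines nonneg. -/
lemma aux_sin_cmp (p N : ℕ) (hp : 1 ≤ p) (hpN : p < N) {e : ℝ}
    (he0 : 0 ≤ e) (he1 : e ≤ Real.pi / N) :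
    0 ≤ Real.sin ((N : ℝ) * e / 2) ∧ 0 ≤ Real.sin ((p : ℝ) * e / 2) ∧
    (p : ℝ) * Real.sin ((N : ℝ) * e / 2) ≤ (N : ℝ) * Real.sin ((p : ℝ) * e / 2) := by
  have hN0 : (0 : ℝ) < N := by exact_mod_cast (by omega : 0 < N)
  have hp0 : (0 : ℝ) < p := by exact_mod_cast hp
  have hpN' : (p : ℝ) ≤ N := by exact_mod_cast hpN.le
  have hNe : e * N ≤ Real.pi := (le_div_iff₀ hN0).1 he1
  have hx1 : (N : ℝ) * e / 2 ≤ Real.pi / 2 := by nlinarith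
  have hx0 : 0 ≤ (N : ℝ) * e / 2 := by positivity
  have hxpi : (N : ℝ) * e / 2 ≤ Real.pi := by linarith [Real.pi_pos]
  have hy0 : 0 ≤ (p : ℝ) * e / 2 := by positivity
  have hy1 : (p : ℝ) * e / 2 ≤ (N : ℝ) * e / 2 := by nlinarith
  refine ⟨Real.sin_nonneg_of_nonneg_of_le_pi hx0 hxpi,
    Real.sin_nonneg_of_nonneg_of_le_pi hy0 (by linarith [Real.pi_pos]), ?_⟩
  have hkey := aux_sin_mul_le (l := (p : ℝ) / N) (x := (N : ℝ) * e / 2)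
    (by positivity) (by rw [div_le_one hN0]; exact hpN') hx0 hxpi
  have heq : (p : ℝ) / N * ((N : ℝ) * e / 2) = (p : ℝ) * e / 2 := by
    field_simp
  rw [heq] at hkey
  calc (p : ℝ) * Real.sin ((N : ℝ) * e / 2)
      = (N : ℝ) * ((p : ℝ) / N * Real.sin ((N : ℝ) * e / 2)) := by field_simp
    _ ≤ (N : ℝ) * Real.sin ((p : ℝ) * e / 2) := by
        exact mul_le_mul_of_nonneg_left hkey hN0.le

set_option maxHeartbeats 1000000 in
lemma aux_key_ineq (p N : ℕ) (hp : 1 ≤ p) (hpN : p < N) {r1 r2 d : ℝ}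
    (h10 : 0 < r1) (h11 : r1 < 1) (h20 : 0 < r2) (h21 : r2 < 1)
    (hd : |d| ≤ Real.pi / N) (hne : r1 ≠ r2 ∨ d ≠ 0) :
    (p : ℝ) ^ 2 * ((r1 ^ N) ^ 2 + (r2 ^ N) ^ 2 - 2 * (r1 ^ N * r2 ^ N) * Real.cos ((N : ℝ) * d))
      < (N : ℝ) ^ 2 * ((r1 ^ p) ^ 2 + (r2 ^ p) ^ 2 - 2 * (r1 ^ p * r2 ^ p) * Real.cos ((p : ℝ) * d)) := by
  have hp0 : (0 : ℝ) < p := by exact_mod_cast hp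
  have hN0 : (0 : ℝ) < N := by exact_mod_cast (by omega : 0 < N)
  set e := |d| with he
  have he0 : 0 ≤ e := abs_nonneg d
  have hcos : ∀ n : ℕ, Real.cos ((n : ℝ) * d) = Real.cos ((n : ℝ) * e) := by
    intro n
    rcases abs_cases d with ⟨h, _⟩ | ⟨h, _⟩ <;> rw [he, h]
    rw [mul_neg, Real.cos_neg]
  have hhalf : ∀ n : ℕ, Real.cos ((n : ℝ) * e) = 1 - 2 * Real.sin ((n : ℝ) * e / 2) ^ 2 := by
    intro n
    have h := Real.sin_sq_eq_half_sub ((n : ℝ) * e / 2)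
    rw [show 2 * ((n : ℝ) * e / 2) = (n : ℝ) * e by ring] at h
    linarith
  obtain ⟨hsN0, hsp0, hsin⟩ := aux_sin_cmp p N hp hpN he0 (he ▸ hd)
  set sN := Real.sin ((N : ℝ) * e / 2)
  set sp := Real.sin ((p : ℝ) * e / 2)
  have hsin2 : (p : ℝ) ^ 2 * sN ^ 2 ≤ (N : ℝ) ^ 2 * sp ^ 2 := by
    nlinarith [mul_self_le_mul_self (by positivity : (0:ℝ) ≤ (p : ℝ) * sN) hsin]
  have hq0 : 0 < r1 * r2 := mul_pos h10 h20
  have hq1 : r1 * r2 < 1 := by nlinarith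
  have hqNp : (r1 * r2) ^ N ≤ (r1 * r2) ^ p := by
    calc (r1 * r2) ^ N = (r1 * r2) ^ p * (r1 * r2) ^ (N - p) := by
          rw [← pow_add]; congr 1; omega
      _ ≤ (r1 * r2) ^ p * 1 := by
          apply mul_le_mul_of_nonneg_left _ (pow_nonneg hq0.le p)
          exact pow_le_one₀ hq0.le hq1.le
      _ = (r1 * r2) ^ p := mul_one _
  have hmp : (r1 * r2) ^ N = r1 ^ N * r2 ^ N := mul_pow r1 r2 N
  have hmp' : (r1 * r2) ^ p = r1 ^ p * r2 ^ p := mul_pow r1 r2 p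
  have hBweak : (p : ℝ) ^ 2 * (r1 ^ N * r2 ^ N) * sN ^ 2
      ≤ (N : ℝ) ^ 2 * (r1 ^ p * r2 ^ p) * sp ^ 2 := by
    have h := mul_le_mul hsin2 hqNp (pow_nonneg hq0.le N) (by positivity)
    rw [hmp, hmp'] at h
    linarith [h]
  have hAweak : (p : ℝ) ^ 2 * (r1 ^ N - r2 ^ N) ^ 2
      ≤ (N : ℝ) ^ 2 * (r1 ^ p - r2 ^ p) ^ 2 := by
    rcases le_total r2 r1 with h | h
    · exact aux_sq_mono p N hp hpN h20.le h h11
    · have h' := aux_sq_mono p N hp hpN h10.le h h21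
      linarith [h', (by ring : (r2 ^ N - r1 ^ N) ^ 2 = (r1 ^ N - r2 ^ N) ^ 2), (by ring : (r2 ^ p - r1 ^ p) ^ 2 = (r1 ^ p - r2 ^ p) ^ 2)]
  rw [hcos N, hcos p, hhalf N, hhalf p]
  rcases hne with hne | hne
  · -- r1 ≠ r2 : strict in A part
    have hAs : (p : ℝ) ^ 2 * (r1 ^ N - r2 ^ N) ^ 2
        < (N : ℝ) ^ 2 * (r1 ^ p - r2 ^ p) ^ 2 := by
      rcases lt_or_gt_of_ne hne with h | h
      · have h' := aux_sq_mono_strict p N hp hpN h10.le h h21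
        linarith [h', (by ring : (r2 ^ N - r1 ^ N) ^ 2 = (r1 ^ N - r2 ^ N) ^ 2), (by ring : (r2 ^ p - r1 ^ p) ^ 2 = (r1 ^ p - r2 ^ p) ^ 2)]
      · exact aux_sq_mono_strict p N hp hpN h20.le h h11
    linarith [hAs, hBweak]
  · -- d ≠ 0 : strict in B part
    have he0' : 0 < e := abs_pos.2 hne
    have hsNpos : 0 < sN := by
      apply Real.sin_pos_of_pos_of_lt_pi (by positivity)
      have hNe : e * N ≤ Real.pi := (le_div_iff₀ hN0).1 (he ▸ hd)
      nlinarith [Real.pi_pos]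
    have hqs : (r1 * r2) ^ N < (r1 * r2) ^ p :=
      pow_lt_pow_right_of_lt_one₀ hq0 hq1 hpN
    have hBs : (p : ℝ) ^ 2 * (r1 ^ N * r2 ^ N) * sN ^ 2
        < (N : ℝ) ^ 2 * (r1 ^ p * r2 ^ p) * sp ^ 2 := by
      have t1 : (p : ℝ) ^ 2 * sN ^ 2 * ((r1 * r2) ^ N)
          < (p : ℝ) ^ 2 * sN ^ 2 * ((r1 * r2) ^ p) :=
        mul_lt_mul_of_pos_left hqs (by positivity)
      have t2 : (p : ℝ) ^ 2 * sN ^ 2 * ((r1 * r2) ^ p)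
          ≤ (N : ℝ) ^ 2 * sp ^ 2 * ((r1 * r2) ^ p) :=
        mul_le_mul_of_nonneg_right hsin2 (pow_nonneg hq0.le p)
      simp only [hmp, hmp'] at t1 t2
      linarith [t1, t2]
    linarith [hAweak, hBs]

/-- normSq of difference of polar forms. -/
lemma aux_normSq_polar (a b x y : ℝ) :
    Complex.normSq ((a : ℂ) * Complex.exp ((x : ℝ) * Complex.I)
      - (b : ℂ) * Complex.exp ((y : ℝ) * Complex.I))
    = a ^ 2 + b ^ 2 - 2 * a * b * Real.cos (x - y) := by
  rw [Complex.exp_mul_I, Complex.exp_mul_I]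
  simp [Complex.normSq_apply, ← Complex.ofReal_cos, ← Complex.ofReal_sin, Real.cos_sub]
  ring_nf
  nlinarith [Real.sin_sq_add_cos_sq x, Real.sin_sq_add_cos_sq y]

set_option maxHeartbeats 2000000 in
/-- f(z) = z^p + conj((p/(p+m−1)) z^{p+m−1}) is p-valent on the unit disk:
every value w is attained at most p times in |z| < 1. -/
theorem stmt_6 (p m : ℕ) (hp : 1 ≤ p) (hm : 2 ≤ m)
    (f : ℂ → ℂ)
    (hf : ∀ z : ℂ, f z = z ^ p +
      (starRingEnd ℂ) (((p : ℂ) / ((p : ℂ) + (m : ℂ) - 1)) * z ^ (p + m - 1)))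
    (w : ℂ) :
    {z : ℂ | ‖z‖ < 1 ∧ f z = w}.Finite ∧
    {z : ℂ | ‖z‖ < 1 ∧ f z = w}.ncard ≤ p := by
  classical
  set N := p + m - 1 with hNdef
  have hpN : p < N := by omega
  have hpne : p ≠ 0 := by omega
  have hcast : ((p : ℂ) + (m : ℂ) - 1) = (N : ℂ) := by
    rw [hNdef]
    push_cast [Nat.cast_sub (by omega : 1 ≤ p + m)]
    ring
  set C : ℂ := (p : ℂ) / (N : ℂ) with hCdef
  have hf' : ∀ z : ℂ, f z = z ^ p + (starRingEnd ℂ) (C * z ^ N) := by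
    intro z; rw [hf z, hcast]
  set c : ℝ := (p : ℝ) / (N : ℝ) with hcdef
  have hNR : (0 : ℝ) < N := by exact_mod_cast (by omega : 0 < N)
  have hpR : (0 : ℝ) < p := by exact_mod_cast hp
  have hc0 : 0 < c := div_pos hpR hNR
  have hc1 : c < 1 := by
    rw [hcdef, div_lt_one hNR]; exact_mod_cast hpN
  have hCabs : ‖C‖ = c := by
    rw [hCdef, hcdef, norm_div]; simp
  set S := {z : ℂ | ‖z‖ < 1 ∧ f z = w} with hSdef
  -- basic facts for members of S
  have hmem : ∀ z ∈ S, ‖z‖ < 1 ∧ z ^ p + (starRingEnd ℂ) (C * z ^ N) = w := by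
    intro z hz
    rw [hSdef, Set.mem_setOf_eq] at hz
    exact ⟨hz.1, by rw [← hf' z]; exact hz.2⟩
  by_cases hw : w = 0
  · -- only solution is 0
    have hsub : S ⊆ {0} := by
      intro z hz
      obtain ⟨hz1, hz2⟩ := hmem z hz
      simp only [Set.mem_singleton_iff]
      by_contra hz0
      have hr0 : 0 < ‖z‖ := by
        simpa [norm_pos_iff] using hz0
      have heq : z ^ p = -((starRingEnd ℂ) (C * z ^ N)) := by
        rw [hw] at hz2; linear_combination hz2
      have habs : ‖z‖ ^ p = c * ‖z‖ ^ N := by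
        have := congrArg norm heq
        rwa [norm_pow, norm_neg, Complex.norm_conj, norm_mul, hCabs, norm_pow] at this
      have h1 : ‖z‖ ^ N < ‖z‖ ^ p :=
        pow_lt_pow_right_of_lt_one₀ hr0 hz1 hpN
      nlinarith [pow_pos hr0 p, pow_pos hr0 N]
    constructor
    · exact (Set.finite_singleton 0).subset hsub
    · exact le_trans (Set.ncard_le_ncard hsub (Set.finite_singleton 0)) (by simpa using hp)
  · -- w ≠ 0
    have hw0 : 0 < ‖w‖ := by simpa [norm_pos_iff] using hw
    have hz0 : ∀ z ∈ S, z ≠ 0 := by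
      intro z hz h0
      obtain ⟨_, hz2⟩ := hmem z hz
      rw [h0] at hz2
      apply hw
      rw [← hz2]
      simp [zero_pow hpne, zero_pow (by omega : N ≠ 0)]
    have heqz : ∀ z ∈ S, z ^ p - w = -((starRingEnd ℂ) (C * z ^ N)) := by
      intro z hz
      have := (hmem z hz).2
      linear_combination this
    have hlt : ∀ z ∈ S, ‖z ^ p - w‖ < c * ‖z‖ ^ p := by
      intro z hz
      obtain ⟨hz1, _⟩ := hmem z hz
      have hr0 : 0 < ‖z‖ := by
        simpa [norm_pos_iff] using hz0 z hz
      have habs : ‖z ^ p - w‖ = c * ‖z‖ ^ N := by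
        rw [heqz z hz, norm_neg]
        rw [Complex.norm_conj, norm_mul, hCabs, norm_pow]
      rw [habs]
      have : ‖z‖ ^ N < ‖z‖ ^ p :=
        pow_lt_pow_right_of_lt_one₀ hr0 hz1 hpN
      nlinarith
    -- the argument of z^p/w is small
    set t : ℂ → ℝ := fun z => Complex.arg (z ^ p / w) with htdef
    have ht : ∀ z ∈ S, |t z| < Real.pi * c / 2 := by
      intro z hz
      have hzne := hz0 z hz
      have hζ0 : z ^ p / w ≠ 0 := div_ne_zero (pow_ne_zero _ hzne) hw
      set ζ := z ^ p / w with hζdef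
      set X := ‖ζ‖ with hXdef
      have hX0 : 0 < X := by simpa [hXdef, norm_pos_iff] using hζ0
      have h1 : ‖ζ - 1‖ < c * X := by
        have e1 : ζ - 1 = (z ^ p - w) / w := by
          rw [hζdef]; field_simp
        have hX : X = ‖z‖ ^ p / ‖w‖ := by
          rw [hXdef, hζdef, norm_div, norm_pow]
        rw [e1, norm_div, hX, ← mul_div_assoc]
        gcongr
        exact hlt z hz
      have h2 : Complex.normSq (ζ - 1) < c ^ 2 * X ^ 2 := by
        have := pow_lt_pow_left₀ h1 (norm_nonneg _) (two_ne_zero)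
        rw [Complex.sq_norm] at this
        calc Complex.normSq (ζ - 1) < (c * X) ^ 2 := this
          _ = c ^ 2 * X ^ 2 := by ring
      have h3 : Complex.normSq (ζ - 1) = Complex.normSq ζ - 2 * ζ.re + 1 := by
        rw [Complex.normSq_sub]
        simp [Complex.normSq_one]
        ring
      have hnX : Complex.normSq ζ = X ^ 2 := by
        rw [Complex.normSq_eq_norm_sq, hXdef]
      set s := Real.sqrt (1 - c ^ 2) with hsdef
      have hs2 : s ^ 2 = 1 - c ^ 2 := Real.sq_sqrt (by nlinarith)
      have hs0 : 0 ≤ s := Real.sqrt_nonneg _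
      have hs1 : s ≤ 1 := by
        rw [hsdef]
        calc Real.sqrt (1 - c ^ 2) ≤ Real.sqrt 1 := Real.sqrt_le_sqrt (by nlinarith)
          _ = 1 := Real.sqrt_one
      have h4 : s * X < ζ.re := by nlinarith [sq_nonneg (s * X - 1)]
      have h5 : Real.cos (t z) = ζ.re / X := Complex.cos_arg hζ0
      have h6 : Real.cos (Real.arccos s) = s := Real.cos_arccos (by linarith) hs1
      have h7 : |t z| < Real.arccos s := by
        by_contra hcon
        push_neg at hcon
        have hle : Real.cos |t z| ≤ Real.cos (Real.arccos s) :=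
          Real.cos_le_cos_of_nonneg_of_le_pi (Real.arccos_nonneg s)
            (Complex.abs_arg_le_pi ζ) hcon
        rw [Real.cos_abs, h5, h6] at hle
        have : s < ζ.re / X := (lt_div_iff₀ hX0).2 h4
        linarith
      have h8 : Real.sin (Real.arccos s) = c := by
        rw [Real.sin_arccos, hs2, show 1 - (1 - c ^ 2) = c ^ 2 by ring,
          Real.sqrt_sq hc0.le]
      have harc2 : Real.arccos s ≤ Real.pi / 2 := Real.arccos_le_pi_div_two.2 hs0
      have h9 : Real.arccos s ≤ Real.pi / 2 * c := by
        have hpi2 : (0 : ℝ) < Real.pi / 2 := by positivity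
        have hj := aux_sin_mul_le (l := Real.arccos s / (Real.pi / 2)) (x := Real.pi / 2)
          (div_nonneg (Real.arccos_nonneg s) hpi2.le)
          (by rw [div_le_one hpi2]; exact harc2) hpi2.le
          (by linarith [Real.pi_pos])
        rw [Real.sin_pi_div_two, mul_one] at hj
        rw [div_mul_cancel₀ _ hpi2.ne'] at hj
        rw [h8] at hj
        calc Real.arccos s = Real.arccos s / (Real.pi / 2) * (Real.pi / 2) := by
              field_simp
          _ ≤ c * (Real.pi / 2) := by
              apply mul_le_mul_of_nonneg_right hj hpi2.le
          _ = Real.pi / 2 * c := by ring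
      calc |t z| < Real.arccos s := h7
        _ ≤ Real.pi / 2 * c := h9
        _ = Real.pi * c / 2 := by ring
    -- the root-assignment map
    set F : ℂ → ℂ := fun z =>
      ((‖z‖ : ℝ) : ℂ)⁻¹ * Complex.exp (-(((t z / p : ℝ)) : ℂ) * Complex.I) * z
      with hFdef
    have hdecomp : ∀ z ∈ S, z =
        ((‖z‖ : ℝ) : ℂ) * Complex.exp (((t z / p : ℝ) : ℂ) * Complex.I) * F z := by
      intro z hz
      have hr0 : ((‖z‖ : ℝ) : ℂ) ≠ 0 := by
        simpa using (hz0 z hz)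
      rw [hFdef]
      simp only
      rw [show ((‖z‖ : ℝ) : ℂ) * Complex.exp (((t z / p : ℝ) : ℂ) * Complex.I) *
          (((‖z‖ : ℝ) : ℂ)⁻¹ * Complex.exp (-(((t z / p : ℝ)) : ℂ) * Complex.I) * z)
          = (((‖z‖ : ℝ) : ℂ) * ((‖z‖ : ℝ) : ℂ)⁻¹) *
            (Complex.exp (((t z / p : ℝ) : ℂ) * Complex.I) *
             Complex.exp (-(((t z / p : ℝ)) : ℂ) * Complex.I)) * z from by ring]
      rw [mul_inv_cancel₀ hr0, ← Complex.exp_add,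
        show (((t z / p : ℝ) : ℂ) * Complex.I + -(((t z / p : ℝ)) : ℂ) * Complex.I) = 0 from by ring,
        Complex.exp_zero]
      ring
    have hFabs : ∀ z ∈ S, ‖F z‖ = 1 := by
      intro z hz
      have hr0 : 0 < ‖z‖ := by
        simpa [norm_pos_iff] using hz0 z hz
      rw [hFdef]
      simp only [norm_mul, norm_inv, Complex.norm_real, Real.norm_eq_abs]
      rw [show -(((t z / p : ℝ)) : ℂ) * Complex.I = ((-(t z / p) : ℝ) : ℂ) * Complex.I from by
        push_cast; ring]
      rw [Complex.norm_exp_ofReal_mul_I]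
      rw [_root_.abs_of_nonneg hr0.le]
      field_simp
    have hFp : ∀ z ∈ S, (F z) ^ p = w / ((‖w‖ : ℝ) : ℂ) := by
      intro z hz
      have hzne := hz0 z hz
      have hr0 : 0 < ‖z‖ := by
        simpa [norm_pos_iff] using hzne
      have hζ : z ^ p = ((‖z‖ ^ p / ‖w‖ : ℝ) : ℂ) *
          Complex.exp (((t z : ℝ) : ℂ) * Complex.I) * w := by
        have h1 : z ^ p / w = ((‖z ^ p / w‖ : ℝ) : ℂ) *
            Complex.exp (((t z : ℝ) : ℂ) * Complex.I) :=
          (Complex.norm_mul_exp_arg_mul_I _).symm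
        have h2 : ‖z ^ p / w‖ = ‖z‖ ^ p / ‖w‖ := by
          rw [norm_div, norm_pow]
        calc z ^ p = z ^ p / w * w := by field_simp
          _ = ((‖z‖ ^ p / ‖w‖ : ℝ) : ℂ) *
              Complex.exp (((t z : ℝ) : ℂ) * Complex.I) * w := by rw [h1, h2]
      have hexp : (Complex.exp (-(((t z / p : ℝ)) : ℂ) * Complex.I)) ^ p
          = Complex.exp (-(((t z : ℝ)) : ℂ) * Complex.I) := by
        rw [← Complex.exp_nat_mul]
        congr 1
        have hpC : (p : ℂ) ≠ 0 := by exact_mod_cast hpne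
        push_cast
        field_simp
      rw [hFdef]
      simp only
      rw [mul_pow, mul_pow, hexp, hζ]
      rw [show (((‖z‖ : ℝ) : ℂ)⁻¹) ^ p *
            Complex.exp (-(((t z : ℝ)) : ℂ) * Complex.I) *
            (((‖z‖ ^ p / ‖w‖ : ℝ) : ℂ) *
              Complex.exp (((t z : ℝ) : ℂ) * Complex.I) * w)
          = (((‖z‖ : ℝ) : ℂ)⁻¹ ^ p * ((‖z‖ ^ p / ‖w‖ : ℝ) : ℂ)) *
            (Complex.exp (-(((t z : ℝ)) : ℂ) * Complex.I) *
             Complex.exp (((t z : ℝ) : ℂ) * Complex.I)) * w from by ring]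
      rw [← Complex.exp_add,
        show (-(((t z : ℝ)) : ℂ) * Complex.I + ((t z : ℝ) : ℂ) * Complex.I) = 0 from by ring,
        Complex.exp_zero, mul_one]
      have hrne : ((‖z‖ : ℝ) : ℂ) ≠ 0 := by simpa using hzne
      have hwne : ((‖w‖ : ℝ) : ℂ) ≠ 0 := by
        simpa using hw0.ne'
      push_cast
      field_simp
      rw [← mul_pow, one_div, inv_mul_cancel₀ hrne, one_pow]
    -- injectivity of F on S
    have hinj : Set.InjOn F S := by
      intro z1 h1 z2 h2 hF
      by_contra hne
      set r1 := ‖z1‖ with hr1def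
      set r2 := ‖z2‖ with hr2def
      have hr10 : 0 < r1 := by simpa [hr1def, norm_pos_iff] using hz0 z1 h1
      have hr20 : 0 < r2 := by simpa [hr2def, norm_pos_iff] using hz0 z2 h2
      have hr11 : r1 < 1 := (hmem z1 h1).1
      have hr21 : r2 < 1 := (hmem z2 h2).1
      set t1 := t z1 with ht1def
      set t2 := t z2 with ht2def
      set d := (t1 - t2) / p with hddef
      obtain ⟨u, hu1, hz1d, hz2d⟩ : ∃ u : ℂ, Complex.normSq u = 1 ∧
          z1 = ((r1 : ℝ) : ℂ) * Complex.exp (((t1 / p : ℝ) : ℂ) * Complex.I) * u ∧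
          z2 = ((r2 : ℝ) : ℂ) * Complex.exp (((t2 / p : ℝ) : ℂ) * Complex.I) * u := by
        refine ⟨F z1, ?_, hdecomp z1 h1, ?_⟩
        · rw [Complex.normSq_eq_norm_sq, hFabs z1 h1]; norm_num
        · rw [hF]; exact hdecomp z2 h2
      -- polar normSq formula for differences of powers
      have hpolar : ∀ n : ℕ, Complex.normSq (z1 ^ n - z2 ^ n)
          = ((r1 ^ n) ^ 2 + (r2 ^ n) ^ 2
            - 2 * (r1 ^ n * r2 ^ n) * Real.cos ((n : ℝ) * d)) := by
        intro n
        have e1 : z1 ^ n - z2 ^ n =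
            (((r1 ^ n : ℝ) : ℂ) * Complex.exp (((n * t1 / p : ℝ) : ℂ) * Complex.I)
            - ((r2 ^ n : ℝ) : ℂ) * Complex.exp (((n * t2 / p : ℝ) : ℂ) * Complex.I)) * u ^ n := by
          rw [hz1d, hz2d]
          rw [mul_pow, mul_pow, mul_pow, mul_pow]
          rw [← Complex.exp_nat_mul, ← Complex.exp_nat_mul]
          push_cast
          ring_nf
        rw [e1, Complex.normSq_mul, map_pow Complex.normSq]
        rw [hu1, one_pow, mul_one]
        rw [aux_normSq_polar]
        congr 1
        rw [hddef]
        field_simp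
      -- the modulus equation
      have hmod : (N : ℝ) ^ 2 * Complex.normSq (z1 ^ p - z2 ^ p)
          = (p : ℝ) ^ 2 * Complex.normSq (z1 ^ N - z2 ^ N) := by
        have k1 := heqz z1 h1
        have k2 := heqz z2 h2
        have hdiff : z1 ^ p - z2 ^ p = (starRingEnd ℂ) (C * (z2 ^ N - z1 ^ N)) := by
          simp only [map_mul] at k1 k2
          rw [map_mul, map_sub]
          linear_combination k1 - k2
        have habs : ‖z1 ^ p - z2 ^ p‖ = c * ‖z1 ^ N - z2 ^ N‖ := by
          rw [hdiff, Complex.norm_conj, norm_mul, hCabs,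
            show z2 ^ N - z1 ^ N = -(z1 ^ N - z2 ^ N) from by ring, norm_neg]
        have hNc : (N : ℝ) * c = p := by
          rw [hcdef]; field_simp
        rw [Complex.normSq_eq_norm_sq, Complex.normSq_eq_norm_sq, habs]
        calc (N : ℝ) ^ 2 * (c * ‖z1 ^ N - z2 ^ N‖) ^ 2
            = ((N : ℝ) * c) ^ 2 * ‖z1 ^ N - z2 ^ N‖ ^ 2 := by ring
          _ = (p : ℝ) ^ 2 * ‖z1 ^ N - z2 ^ N‖ ^ 2 := by rw [hNc]
      -- the angular gap
      have hd : |d| ≤ Real.pi / N := by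
        have ht1 := ht z1 h1
        have ht2 := ht z2 h2
        have : |t1 - t2| ≤ |t1| + |t2| := abs_sub t1 t2
        have hda : |d| = |t1 - t2| / p := by
          rw [hddef, abs_div]
          congr 1
          exact abs_of_pos hpR
        rw [hda]
        rw [div_le_iff₀ hpR]
        have hcp : Real.pi / (N : ℝ) * p = Real.pi * c := by
          rw [hcdef]; field_simp
        rw [hcp]
        calc |t1 - t2| ≤ |t1| + |t2| := abs_sub t1 t2
          _ ≤ Real.pi * c / 2 + Real.pi * c / 2 := add_le_add ht1.le ht2.le
          _ = Real.pi * c := by ring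
      have hne2 : r1 ≠ r2 ∨ d ≠ 0 := by
        by_contra hcon
        push_neg at hcon
        obtain ⟨he1, he2⟩ := hcon
        have ht12 : t1 = t2 := by
          have : (t1 - t2) / p = 0 := he2
          have := (div_eq_zero_iff.1 this)
          rcases this with h | h
          · exact sub_eq_zero.1 h
          · exact absurd h hpR.ne'
        apply hne
        rw [hz1d, hz2d, he1, ht12]
      have hkey := aux_key_ineq p N hp hpN hr10 hr11 hr20 hr21 hd hne2
      rw [hpolar p, hpolar N] at hmod
      linarith [hkey, hmod]
    -- conclusion via the p-th roots of w/|w|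
    have himg : F '' S ⊆ ↑((Polynomial.nthRoots p (w / ((‖w‖ : ℝ) : ℂ))).toFinset) := by
      rintro y ⟨z, hz, rfl⟩
      rw [Finset.mem_coe, Multiset.mem_toFinset,
        Polynomial.mem_nthRoots (by omega : 0 < p)]
      exact hFp z hz
    have hfin : S.Finite :=
      Set.Finite.of_finite_image
        ((Finset.finite_toSet _).subset himg) hinj
    refine ⟨hfin, ?_⟩
    calc S.ncard = (F '' S).ncard := (Set.ncard_image_of_injOn hinj).symm
      _ ≤ (((Polynomial.nthRoots p (w / ((‖w‖ : ℝ) : ℂ))).toFinset : Finset ℂ) : Set ℂ).ncard :=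
          Set.ncard_le_ncard himg (Finset.finite_toSet _)
      _ = ((Polynomial.nthRoots p (w / ((‖w‖ : ℝ) : ℂ))).toFinset : Finset ℂ).card :=
          Set.ncard_coe_finset _
      _ ≤ Multiset.card (Polynomial.nthRoots p (w / ((‖w‖ : ℝ) : ℂ))) :=
          Multiset.toFinset_card_le _
      _ ≤ p := Polynomial.card_nthRoots p _
end

section
/- Let p ≥ 1, m ≥ 2 be integers and let h(z) = z^p + (c/(p+1)) z^{p+1} with c ∈ ℂ satisfying |c| ≤ p − 2p/(2p+m+1). Then Re(1 + z h''(z)/h'(z)) > −(m−1)/2 for all z in the open unit disk. -/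
open Complex Metric

lemma aux_pow_deriv (n : ℕ) (w : ℂ) :
    w * ((n : ℂ) * w ^ (n - 1)) = (n : ℂ) * w ^ n := by
  rcases n with _ | k
  · simp
  · push_cast
    ring

set_option maxHeartbeats 1000000 in
/-- for h(z) = z^p + (c/(p+1)) z^{p+1} with |c| ≤ p − 2p/(2p+m+1),
Re(1 + z h''(z)/h'(z)) > −(m−1)/2 on the open unit disk. -/
theorem stmt_8 (p m : ℕ) (hp : 1 ≤ p) (hm : 2 ≤ m) (c : ℂ)
    (hc : ‖c‖ ≤ (p : ℝ) - 2 * p / (2 * p + m + 1))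
    (h : ℂ → ℂ)
    (hh : ∀ z : ℂ, h z = z ^ p + (c / ((p : ℂ) + 1)) * z ^ (p + 1))
    (z : ℂ) (hz : ‖z‖ < 1) :
    ((1 : ℂ) + z * deriv (deriv h) z / deriv h z).re > -(((m : ℝ) - 1) / 2) := by
  obtain ⟨q, rfl⟩ : ∃ q, p = q + 1 := ⟨p - 1, (Nat.succ_pred_eq_of_pos hp).symm⟩
  have hmR : (2 : ℝ) ≤ (m : ℝ) := by exact_mod_cast hm
  have hqR : (0 : ℝ) ≤ (q : ℝ) := Nat.cast_nonneg q
  -- first derivative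
  have hne : ((q : ℂ) + 1 + 1) ≠ 0 := by
    have := Nat.cast_add_one_ne_zero (R := ℂ) (q + 1)
    push_cast at this
    exact this
  have hh1 : deriv h = fun w : ℂ => ((q : ℂ) + 1) * w ^ q + c * w ^ (q + 1) := by
    funext w
    have hhe : h = fun u : ℂ => u ^ (q + 1) + (c / ((q : ℂ) + 1 + 1)) * u ^ (q + 2) := by
      funext u
      rw [hh]
      push_cast
      ring_nf
    rw [hhe]
    rw [deriv_fun_add (differentiableAt_pow _) ((differentiableAt_pow _).const_mul _),
      deriv_const_mul _ (differentiableAt_pow _), deriv_pow_field, deriv_pow_field]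
    push_cast
    field_simp
    ring
  -- real quantities
  set t : ℝ := ‖c * z‖ with ht
  have ht0 : 0 ≤ t := norm_nonneg _
  have hdpos : (0 : ℝ) < 2 * (q + 1 : ℝ) + m + 1 := by nlinarith
  have hcB : ‖c‖ * (2 * ((q : ℝ) + 1) + m + 1) ≤ ((q : ℝ) + 1) * (2 * ((q : ℝ) + 1) + m - 1) := by
    have h1 := mul_le_mul_of_nonneg_right hc hdpos.le
    push_cast at h1
    have h2 : ((q : ℝ) + 1 - 2 * ((q : ℝ) + 1) / (2 * ((q : ℝ) + 1) + (m : ℝ) + 1)) * (2 * ((q : ℝ) + 1) + (m : ℝ) + 1)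
        = ((q : ℝ) + 1) * (2 * ((q : ℝ) + 1) + m - 1) := by
      field_simp
      ring
    nlinarith [h1, h2]
  have htB : t * (2 * ((q : ℝ) + 1) + m + 1) < ((q : ℝ) + 1) * (2 * ((q : ℝ) + 1) + m - 1) := by
    rcases eq_or_ne c 0 with rfl | hc0
    · simp only [ht, zero_mul, norm_zero]
      nlinarith
    · have hcp : 0 < ‖c‖ := norm_pos_iff.mpr hc0
      have htlt : t < ‖c‖ := by
        rw [ht, norm_mul]
        nlinarith
      calc t * (2 * ((q : ℝ) + 1) + m + 1) < ‖c‖ * (2 * ((q : ℝ) + 1) + m + 1) := by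
            nlinarith
        _ ≤ _ := hcB
  have htp : t < (q : ℝ) + 1 := by nlinarith
  -- z = 0 case
  rcases eq_or_ne z 0 with rfl | hz0
  · simp only [zero_mul, zero_div, add_zero, Complex.one_re]
    nlinarith
  -- denominator nonzero
  have hD : ((q : ℂ) + 1) + c * z ≠ 0 := by
    intro hDz
    have : ‖(q : ℂ) + 1‖ = ‖c * z‖ := by
      have : (q : ℂ) + 1 = -(c * z) := by linear_combination hDz
      rw [this, norm_neg]
    rw [show ((q : ℂ) + 1) = ((q + 1 : ℕ) : ℂ) by push_cast; ring, Complex.norm_natCast] at this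
    push_cast at this
    rw [← ht] at this
    nlinarith
  have hzq : z ^ q ≠ 0 := pow_ne_zero _ hz0
  -- second derivative and simplification
  have hnum : z * deriv (deriv h) z = z ^ q * (((q : ℂ) + 1) * q + c * ((q : ℂ) + 1) * z) := by
    rw [hh1]
    rw [deriv_fun_add ((differentiableAt_pow _).const_mul _) ((differentiableAt_pow _).const_mul _),
      deriv_const_mul _ (differentiableAt_pow _), deriv_const_mul _ (differentiableAt_pow _),
      deriv_pow_field, deriv_pow_field]
    have hk := aux_pow_deriv q z
    push_cast
    linear_combination ((q : ℂ) + 1) * hk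
  have hden : deriv h z = z ^ q * (((q : ℂ) + 1) + c * z) := by
    rw [hh1]
    ring
  have hE : (1 : ℂ) + z * deriv (deriv h) z / deriv h z
      = ((q : ℂ) + 1) + c * z / (((q : ℂ) + 1) + c * z) := by
    rw [hnum, hden, mul_div_mul_left _ _ hzq]
    field_simp
    ring
  rw [hE]
  -- real part estimate
  have habsD : ((q : ℝ) + 1) - t ≤ ‖((q : ℂ) + 1) + c * z‖ := by
    have h1 : ‖(q : ℂ) + 1‖ ≤ ‖((q : ℂ) + 1) + c * z‖ + ‖c * z‖ := by
      have h2 := norm_add_le (((q : ℂ) + 1) + c * z) (-(c * z))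
      rw [add_neg_cancel_right, norm_neg] at h2
      exact h2
    rw [show ((q : ℂ) + 1) = ((q + 1 : ℕ) : ℂ) by push_cast; ring, Complex.norm_natCast] at h1
    push_cast at h1
    rw [← ht] at h1
    linarith
  have hDpos : (0 : ℝ) < ‖((q : ℂ) + 1) + c * z‖ := norm_pos_iff.mpr hD
  have hre : (c * z / (((q : ℂ) + 1) + c * z)).re ≥ -(t / ‖((q : ℂ) + 1) + c * z‖) := by
    have h1 := Complex.abs_re_le_norm (c * z / (((q : ℂ) + 1) + c * z))
    rw [norm_div, ← ht] at h1
    have := neg_abs_le (c * z / (((q : ℂ) + 1) + c * z)).re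
    linarith
  have hfrac : t / ‖((q : ℂ) + 1) + c * z‖ < ((q : ℝ) + 1) + ((m : ℝ) - 1) / 2 := by
    have hs : (0 : ℝ) < ((q : ℝ) + 1) - t := by linarith
    calc t / ‖((q : ℂ) + 1) + c * z‖ ≤ t / (((q : ℝ) + 1) - t) :=
          div_le_div_of_nonneg_left ht0 hs habsD
      _ < ((q : ℝ) + 1) + ((m : ℝ) - 1) / 2 := by
          rw [div_lt_iff₀ hs]
          nlinarith
  have hsum : (((q : ℂ) + 1) + c * z / (((q : ℂ) + 1) + c * z)).re
      = ((q : ℝ) + 1) + (c * z / (((q : ℂ) + 1) + c * z)).re := by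
    simp [Complex.add_re]
  rw [hsum]
  nlinarith [hre, hfrac]
end

section
/- Let p ≥ 1, m ≥ 2 be integers. The boundary curve φ(t) = e^{ipt} + (p/(p+m−1)) e^{−i(p+m−1)t}, t ∈ [−π, π), of f(z) = z^p + conj((p/(p+m−1)) z^{p+m−1}) satisfies Im(φ''(t) conj(φ'(t))) = −p²(m−1)(1 − cos((2p+m−1)t)) ≤ 0 for all t, with equality exactly when e^{i(2p+m−1)t} = 1. -/
open Complex Metric

lemma hasDerivAt_exp_mul' (c : ℂ) (t : ℝ) :
    HasDerivAt (fun t : ℝ => Complex.exp (c * t)) (c * Complex.exp (c * t)) t := by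
  have h : HasDerivAt (fun t : ℝ => c * (t : ℂ)) c t := by
    simpa using (Complex.ofRealCLM.hasDerivAt (x := t)).const_mul c
  simpa [mul_comm] using h.cexp

/-- for φ(t) = e^{ipt} + (p/(p+m−1)) e^{−i(p+m−1)t},
Im(φ''(t) conj(φ'(t))) = −p²(m−1)(1 − cos((2p+m−1)t)) ≤ 0, with equality exactly
when e^{i(2p+m−1)t} = 1. -/
theorem stmt_18 (p m : ℕ) (hp : 1 ≤ p) (hm : 2 ≤ m) (φ : ℝ → ℂ)
    (hφ : ∀ t : ℝ, φ t = Complex.exp (Complex.I * p * t) +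
      ((p : ℂ) / ((p : ℂ) + (m : ℂ) - 1)) *
        Complex.exp (-Complex.I * ((p : ℂ) + (m : ℂ) - 1) * t))
    (t : ℝ) :
    (deriv (deriv φ) t * (starRingEnd ℂ) (deriv φ t)).im =
      -((p : ℝ) ^ 2 * ((m : ℝ) - 1) * (1 - Real.cos ((2 * p + m - 1 : ℝ) * t))) ∧
    (deriv (deriv φ) t * (starRingEnd ℂ) (deriv φ t)).im ≤ 0 ∧
    ((deriv (deriv φ) t * (starRingEnd ℂ) (deriv φ t)).im = 0 ↔
      Complex.exp (Complex.I * (2 * p + m - 1 : ℝ) * t) = 1) := by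
  have hφfun : φ = fun t : ℝ => Complex.exp (Complex.I * p * t) +
      ((p : ℂ) / ((p : ℂ) + (m : ℂ) - 1)) *
        Complex.exp (-Complex.I * ((p : ℂ) + (m : ℂ) - 1) * t) := funext hφ
  set a : ℂ := (p : ℂ) with ha
  set b : ℂ := (p : ℂ) + (m : ℂ) - 1 with hbdef
  have hbreal : b = ((p + m - 1 : ℝ) : ℂ) := by push_cast; ring
  have hbne : b ≠ 0 := by
    rw [hbreal]
    have : (0:ℝ) < (p:ℝ) + m - 1 := by
      have h1 : (1:ℝ) ≤ p := by exact_mod_cast hp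
      have h2 : (2:ℝ) ≤ m := by exact_mod_cast hm
      linarith
    exact_mod_cast Complex.ofReal_ne_zero.mpr (ne_of_gt this)
  -- first derivative
  have hd1 : ∀ s : ℝ, HasDerivAt φ
      (Complex.I * a * Complex.exp (Complex.I * a * s)
        - Complex.I * a * Complex.exp (-Complex.I * b * s)) s := by
    intro s
    rw [hφfun]
    have h1 := hasDerivAt_exp_mul' (Complex.I * a) s
    have h2 := (hasDerivAt_exp_mul' (-Complex.I * b) s).const_mul (a / b)
    have := h1.add h2
    convert this using 1
    case e'_4 => rfl
    case e'_8 => rfl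
    field_simp
    ring
  have hderiv1 : deriv φ = fun s : ℝ =>
      Complex.I * a * Complex.exp (Complex.I * a * s)
        - Complex.I * a * Complex.exp (-Complex.I * b * s) := by
    funext s; exact (hd1 s).deriv
  have hd2 : ∀ s : ℝ, HasDerivAt (deriv φ)
      (-(a * a) * Complex.exp (Complex.I * a * s)
        - a * b * Complex.exp (-Complex.I * b * s)) s := by
    intro s
    rw [hderiv1]
    have h1 := (hasDerivAt_exp_mul' (Complex.I * a) s).const_mul (Complex.I * a)
    have h2 := (hasDerivAt_exp_mul' (-Complex.I * b) s).const_mul (Complex.I * a)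
    have := h1.sub h2
    convert this using 1
    case e'_4 => rfl
    case e'_8 => rfl
    have hI : Complex.I * Complex.I = -1 := Complex.I_mul_I
    ring_nf
    rw [Complex.I_sq]
    ring
  have hderiv2 : deriv (deriv φ) t =
      -(a * a) * Complex.exp (Complex.I * a * t)
        - a * b * Complex.exp (-Complex.I * b * t) := (hd2 t).deriv
  -- real abbreviations
  set x : ℝ := (p : ℝ) * t with hx
  set y : ℝ := ((p : ℝ) + m - 1) * t with hy
  have hexpa : Complex.exp (Complex.I * a * t) = Real.cos x + Real.sin x * Complex.I := by
    rw [show Complex.I * a * t = (x : ℂ) * Complex.I by rw [hx]; push_cast; ring,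
      Complex.exp_mul_I]
    simp [Complex.ofReal_cos, Complex.ofReal_sin]
  have hexpb : Complex.exp (-Complex.I * b * t) = Real.cos y - Real.sin y * Complex.I := by
    rw [show -Complex.I * b * t = ((-y : ℝ) : ℂ) * Complex.I by
      rw [hy, hbdef]; push_cast; ring, Complex.exp_mul_I]
    simp [Complex.ofReal_cos, Complex.ofReal_sin, Real.cos_neg, Real.sin_neg]
    ring
  have hbr : (b : ℂ) = (((p:ℝ) + m - 1 : ℝ) : ℂ) := by push_cast; ring
  have hθ : (2 * (p:ℝ) + m - 1) * t = x + y := by rw [hx, hy]; ring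
  have hIm : (deriv (deriv φ) t * (starRingEnd ℂ) (deriv φ t)).im =
      -((p : ℝ) ^ 2 * ((m : ℝ) - 1) * (1 - Real.cos ((2 * p + m - 1 : ℝ) * t))) := by
    rw [hderiv2]
    simp only [hderiv1]
    rw [hexpa, hexpb, ha, hbr, hθ, Real.cos_add]
    simp only [map_sub, map_add, map_mul, Complex.conj_I, Complex.conj_ofReal, map_neg,
      Complex.mul_im, Complex.mul_re, Complex.sub_re, Complex.sub_im,
      Complex.add_re, Complex.add_im, Complex.neg_re, Complex.neg_im,
      Complex.I_re, Complex.I_im, Complex.ofReal_re, Complex.ofReal_im,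
      Complex.natCast_re, Complex.natCast_im, map_natCast]
    linear_combination ((p:ℝ)^3) * Real.sin_sq_add_cos_sq x - ((p:ℝ)^2*((p:ℝ)+m-1)) * Real.sin_sq_add_cos_sq y
  refine ⟨hIm, ?_, ?_⟩
  · rw [hIm]
    have h1 : Real.cos ((2 * p + m - 1 : ℝ) * t) ≤ 1 := Real.cos_le_one _
    have h2 : (0:ℝ) ≤ (p:ℝ)^2 * ((m:ℝ) - 1) := by
      have h3 : (2:ℝ) ≤ m := by exact_mod_cast hm
      nlinarith [sq_nonneg ((p:ℝ))]
    nlinarith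
  · rw [hIm]
    have hpos : (0:ℝ) < (p:ℝ)^2 * ((m:ℝ) - 1) := by
      have h1 : (1:ℝ) ≤ p := by exact_mod_cast hp
      have h2 : (2:ℝ) ≤ m := by exact_mod_cast hm
      nlinarith
    constructor
    · intro h
      have hc : Real.cos ((2 * p + m - 1 : ℝ) * t) = 1 := by
        have h1 : Real.cos ((2 * p + m - 1 : ℝ) * t) ≤ 1 := Real.cos_le_one _
        nlinarith
      have hs : Real.sin ((2 * p + m - 1 : ℝ) * t) = 0 := by
        have := Real.sin_sq_add_cos_sq ((2 * p + m - 1 : ℝ) * t)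
        nlinarith
      rw [show Complex.I * (2 * p + m - 1 : ℝ) * t = (((2 * p + m - 1 : ℝ) * t : ℝ) : ℂ) * Complex.I by push_cast; ring,
        Complex.exp_mul_I, ← Complex.ofReal_cos, ← Complex.ofReal_sin, hc, hs]
      simp
    · intro h
      rw [show Complex.I * (2 * p + m - 1 : ℝ) * t = (((2 * p + m - 1 : ℝ) * t : ℝ) : ℂ) * Complex.I by push_cast; ring,
        Complex.exp_mul_I, ← Complex.ofReal_cos, ← Complex.ofReal_sin] at h
      have hc : Real.cos ((2 * p + m - 1 : ℝ) * t) = 1 := by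
        have hre := congrArg Complex.re h
        simp only [Complex.add_re, Complex.mul_re, Complex.ofReal_re, Complex.ofReal_im,
          Complex.I_re, Complex.I_im, Complex.one_re] at hre
        linarith
      rw [hc]; ring
end

section
/- Let m ≥ 2 be an integer. Define h and g on the open unit disk by h(z) = ∫₀^z dζ/(1+ζ^{m+1}) and g(z) = ∫₀^z ζ^{m−1} dζ/(1+ζ^{m+1}). Then g'(z) = z^{m−1} h'(z), h'(z) ≠ 0 for all |z| < 1, and Re(1 + z h''(z)/h'(z)) = Re( (1 − m z^{m+1})/(1 + z^{m+1}) ) > −(m−1)/2 for all |z| < 1. -/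
open Complex Metric

lemma aux_ne (w : ℂ) (hw : ‖w‖ < 1) : 1 + w ≠ 0 := by
  intro h
  have hw1 : w = -1 := by linear_combination h
  rw [hw1] at hw
  simp at hw

lemma aux_re (w : ℂ) (hw : ‖w‖ < 1) (m : ℕ) :
    ((1 - (m : ℂ) * w) / (1 + w)).re > -(((m : ℝ) - 1) / 2) := by
  have hne : 1 + w ≠ 0 := aux_ne w hw
  have hre : -1 < w.re := by
    have := Complex.abs_re_le_norm w
    have := abs_lt.mp (lt_of_le_of_lt this hw)
    linarith [this.1]
  have hns : Complex.normSq w < 1 := by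
    rw [← Complex.sq_norm]
    nlinarith [norm_nonneg w]
  have hnspos : 0 < Complex.normSq (1 + w) := by
    simpa [Complex.normSq_pos] using hne
  have hns1 : Complex.normSq (1 + w) = 1 + 2 * w.re + Complex.normSq w := by
    simp [Complex.normSq_apply]; ring
  have key : (1 / 2 : ℝ) < ((1 + w)⁻¹).re := by
    rw [Complex.inv_re]
    rw [lt_div_iff₀ hnspos]
    have : (1 + w).re = 1 + w.re := by simp
    rw [this]
    have := Complex.normSq_apply w
    nlinarith [Complex.normSq_nonneg w]
  have heq : (1 - (m : ℂ) * w) / (1 + w) = ((m : ℂ) + 1) * (1 + w)⁻¹ - m := by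
    field_simp
    ring
  rw [heq]
  have : (((m : ℂ) + 1) * (1 + w)⁻¹ - m).re
      = ((m : ℝ) + 1) * ((1 + w)⁻¹).re - m := by
    simp [Complex.sub_re, Complex.mul_re]
  rw [this]
  have hm0 : (0 : ℝ) ≤ (m : ℝ) := Nat.cast_nonneg m
  nlinarith

/-- for h, g antiderivatives on the unit disk of 1/(1+z^{m+1}) and
z^{m−1}/(1+z^{m+1}) respectively, g'(z) = z^{m−1} h'(z), h'(z) ≠ 0, and
Re(1 + z h''(z)/h'(z)) = Re((1 − m z^{m+1})/(1 + z^{m+1})) > −(m−1)/2 for |z| < 1. -/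
theorem stmt_19 (m : ℕ) (hm : 2 ≤ m) (h g : ℂ → ℂ)
    (hd : ∀ z ∈ ball (0 : ℂ) 1, HasDerivAt h (1 / (1 + z ^ (m + 1))) z)
    (gd : ∀ z ∈ ball (0 : ℂ) 1, HasDerivAt g (z ^ (m - 1) / (1 + z ^ (m + 1))) z)
    (z : ℂ) (hz : z ∈ ball (0 : ℂ) 1) :
    deriv g z = z ^ (m - 1) * deriv h z ∧
    deriv h z ≠ 0 ∧
    ((1 : ℂ) + z * deriv (deriv h) z / deriv h z).re =
      ((1 - (m : ℂ) * z ^ (m + 1)) / (1 + z ^ (m + 1))).re ∧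
    ((1 : ℂ) + z * deriv (deriv h) z / deriv h z).re > -(((m : ℝ) - 1) / 2) := by
  have hz1 : ‖z‖ < 1 := by simpa using mem_ball_zero_iff.mp hz
  have hw : ‖z ^ (m + 1)‖ < 1 := by
    rw [norm_pow]
    exact pow_lt_one₀ (norm_nonneg z) hz1 (Nat.succ_ne_zero m)
  have hne : 1 + z ^ (m + 1) ≠ 0 := aux_ne _ hw
  have hderh : deriv h z = 1 / (1 + z ^ (m + 1)) := (hd z hz).deriv
  have hderg : deriv g z = z ^ (m - 1) / (1 + z ^ (m + 1)) := (gd z hz).deriv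
  -- second derivative
  have heq : deriv h =ᶠ[nhds z] fun w => 1 / (1 + w ^ (m + 1)) := by
    filter_upwards [isOpen_ball.mem_nhds hz] with x hx
    exact (hd x hx).deriv
  have hf : HasDerivAt (fun w : ℂ => 1 / (1 + w ^ (m + 1)))
      (-(((m : ℂ) + 1) * z ^ m) / (1 + z ^ (m + 1)) ^ 2) z := by
    have h1 : HasDerivAt (fun w : ℂ => 1 + w ^ (m + 1)) (((m : ℂ) + 1) * z ^ m) z := by
      simpa using (hasDerivAt_pow (m + 1) z).const_add 1
    simpa [one_div] using h1.fun_inv hne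
  have hderh2 : deriv (deriv h) z = -(((m : ℂ) + 1) * z ^ m) / (1 + z ^ (m + 1)) ^ 2 := by
    rw [heq.deriv_eq]
    exact hf.deriv
  have hkey : (1 : ℂ) + z * deriv (deriv h) z / deriv h z
      = (1 - (m : ℂ) * z ^ (m + 1)) / (1 + z ^ (m + 1)) := by
    rw [hderh, hderh2]
    have hzz : z * z ^ m = z ^ (m + 1) := (pow_succ z m).symm ▸ by ring
    field_simp
    ring_nf
  refine ⟨by rw [hderg, hderh]; ring, ?_, by rw [hkey], by rw [hkey]; exact aux_re _ hw m⟩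
  rw [hderh]
  simp [hne]
end
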